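/- arXiv:2410.11784 — 3 statements merged into one kernel-verified Lean document; each statement's English description precedes it below -/
import Mathlib

section
/- Let D be a positive integer with exactly n+1 decimal digits such that D > rev(D) and D − rev(D) has the same number of decimal digits as D, and let F be the Papadakis–Webster integer produced by D. Then the quotient F/99 has exactly n decimal digits, and its leading decimal digit is 1. -/
lemma ofDigits_eq_sum_getD (l : List ℕ) :
    Nat.ofDigits 10 l = ∑ i ∈ Finset.range l.length, l.getD i 0 * 10 ^ i := by
  induction l with
  | nil => simp [Nat.ofDigits]
  | cons d t ih =>
    rw [Nat.ofDigits_cons, List.length_cons, Finset.sum_range_succ']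
    simp only [List.getD_cons_succ, List.getD_cons_zero, pow_zero, mul_one, pow_succ]
    rw [ih, Finset.mul_sum, add_comm]
    congr 1
    exact Finset.sum_congr rfl fun x _ => by ring

lemma ofDigits_div_pow_mod (l : List ℕ) (hl : ∀ x ∈ l, x < 10) (i : ℕ) :
    Nat.ofDigits 10 l / 10 ^ i % 10 = l.getD i 0 := by
  induction l generalizing i with
  | nil => simp [Nat.ofDigits]
  | cons d t ih =>
    have hd : d < 10 := hl d List.mem_cons_self
    have ht : ∀ x ∈ t, x < 10 := fun x hx => hl x (List.mem_cons_of_mem _ hx)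
    cases i with
    | zero =>
      simp only [pow_zero, Nat.div_one, List.getD_cons_zero, Nat.ofDigits_cons]
      omega
    | succ i =>
      rw [Nat.ofDigits_cons, List.getD_cons_succ, pow_succ', ← Nat.div_div_eq_div_mul]
      have : (d + 10 * Nat.ofDigits 10 t) / 10 = Nat.ofDigits 10 t := by omega
      rw [this, ih ht]

lemma mod_succ_pow (X i : ℕ) : X % 10 ^ (i + 1) = X % 10 ^ i + 10 ^ i * (X / 10 ^ i % 10) := by
  rw [pow_succ, Nat.mod_mul]

lemma mod_pow_eq_sum (X m : ℕ) :
    X % 10 ^ m = ∑ i ∈ Finset.range m, (X / 10 ^ i % 10) * 10 ^ i := by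
  induction m with
  | zero => simp [Nat.mod_one]
  | succ m ih => rw [Finset.sum_range_succ, mod_succ_pow, ih]; ring


/-- Digital reversal of a natural number (in base 10). -/
def rev (D : ℕ) : ℕ := Nat.ofDigits 10 ((Nat.digits 10 D).reverse)

/-- if `D` has exactly `n+1` decimal digits, `D > rev D`, and
`E = D - rev D` has the same number of decimal digits as `D`, then the quotient
`F / 99` of the Papadakis–Webster integer `F = E + rev E` has exactly `n` decimal
digits, and its leading (most significant) decimal digit is 1. -/
theorem stmt4 (D n : ℕ) (hpos : 0 < D)
    (hlenD : (Nat.digits 10 D).length = n + 1)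
    (hlt : rev D < D)
    (hlenE : (Nat.digits 10 (D - rev D)).length = n + 1) :
    (Nat.digits 10 (((D - rev D) + rev (D - rev D)) / 99)).length = n ∧
    (Nat.digits 10 (((D - rev D) + rev (D - rev D)) / 99)).getLast? = some 1 := by
  have hb : (1:ℕ) < 10 := by norm_num
  set Y := rev D with hYdef
  set E := D - Y with hEdef
  -- basic bounds
  have hDlt : D < 10 ^ (n + 1) := by
    have := Nat.lt_base_pow_length_digits (b := 10) (m := D) hb
    rwa [hlenD] at this
  have hElt : E < 10 ^ (n + 1) := by
    have := Nat.lt_base_pow_length_digits (b := 10) (m := E) hb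
    rwa [hlenE] at this
  have hEne : E ≠ 0 := by
    intro h
    rw [h] at hlenE
    simp at hlenE
  have hEge : 10 ^ n ≤ E := by
    have h1 := Nat.base_pow_length_digits_le 10 E hb hEne
    rw [hlenE, pow_succ'] at h1
    exact Nat.le_of_mul_le_mul_left h1 (by norm_num)
  have hYlt : Y < D := hlt
  -- n ≥ 1
  have hn : 1 ≤ n := by
    by_contra h
    push_neg at h
    interval_cases n
    obtain ⟨x, hx⟩ := List.length_eq_one_iff.mp hlenD
    have : Y = D := by
      rw [hYdef]
      show Nat.ofDigits 10 (Nat.digits 10 D).reverse = D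
      rw [hx]
      simp only [List.reverse_singleton]
      rw [← hx, Nat.ofDigits_digits]
    omega
  -- digit functions
  set a : ℕ → ℕ := fun i => D / 10 ^ i % 10 with ha
  set b : ℕ → ℕ := fun i => Y / 10 ^ i % 10 with hbdef
  set e : ℕ → ℕ := fun i => E / 10 ^ i % 10 with he
  set c : ℕ → ℕ := fun i => if D % 10 ^ i < Y % 10 ^ i then 1 else 0 with hc
  have hc_le : ∀ i, c i ≤ 1 := by
    intro i
    simp only [hc]
    split <;> norm_num
  have hc0 : c 0 = 0 := by simp [hc, Nat.mod_one]
  have hcn1 : c (n + 1) = 0 := by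
    simp only [hc]
    rw [Nat.mod_eq_of_lt hDlt, Nat.mod_eq_of_lt (lt_trans hYlt hDlt)]
    simp [Nat.not_lt.mpr hYlt.le]
  -- digit lists
  have hlD : ∀ x ∈ Nat.digits 10 D, x < 10 := fun x hx => Nat.digits_lt_base hb hx
  have hlDr : ∀ x ∈ (Nat.digits 10 D).reverse, x < 10 :=
    fun x hx => hlD x (List.mem_reverse.mp hx)
  have hlE : ∀ x ∈ Nat.digits 10 E, x < 10 := fun x hx => Nat.digits_lt_base hb hx
  have hgetD : ∀ i, (Nat.digits 10 D).getD i 0 = a i := by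
    intro i
    rw [← ofDigits_div_pow_mod _ hlD i, Nat.ofDigits_digits]
  have hgetE : ∀ i, (Nat.digits 10 E).getD i 0 = e i := by
    intro i
    rw [← ofDigits_div_pow_mod _ hlE i, Nat.ofDigits_digits]
  have hYval : Y = Nat.ofDigits 10 (Nat.digits 10 D).reverse := rfl
  -- K1 : b i = a (n - i) for i ≤ n
  have hK1 : ∀ i ≤ n, b i = a (n - i) := by
    intro i hi
    have h1 : b i = (Nat.digits 10 D).reverse.getD i 0 := by
      rw [hbdef]
      simp only
      rw [hYval, ofDigits_div_pow_mod _ hlDr i]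
    have hilen : i < (Nat.digits 10 D).reverse.length := by
      rw [List.length_reverse, hlenD]; omega
    have hnilen : n - i < (Nat.digits 10 D).length := by rw [hlenD]; omega
    rw [h1, ← hgetD (n - i)]
    rw [List.getD_eq_getElem _ _ hilen, List.getD_eq_getElem _ _ hnilen,
      List.getElem_reverse]
    congr 1
    rw [hlenD]
    omega
  -- E as integer
  have hEZ : (E : ℤ) = (D : ℤ) - (Y : ℤ) := by
    rw [hEdef]
    push_cast [Nat.cast_sub hYlt.le]
    ring
  -- K3
  have hK3 : ∀ i : ℕ, ((E % 10 ^ i : ℕ) : ℤ)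
      = ((D % 10 ^ i : ℕ) : ℤ) - ((Y % 10 ^ i : ℕ) : ℤ) + (c i : ℤ) * 10 ^ i := by
    intro i
    have hpow : (0:ℕ) < 10 ^ i := by positivity
    have hDm : ((D % 10 ^ i : ℕ) : ℤ) < 10 ^ i := by exact_mod_cast Nat.mod_lt _ hpow
    have hYm : ((Y % 10 ^ i : ℕ) : ℤ) < 10 ^ i := by exact_mod_cast Nat.mod_lt _ hpow
    have hDm0 : (0:ℤ) ≤ ((D % 10 ^ i : ℕ) : ℤ) := by positivity
    have hYm0 : (0:ℤ) ≤ ((Y % 10 ^ i : ℕ) : ℤ) := by positivity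
    have hDd : (D : ℤ) = 10 ^ i * ((D / 10 ^ i : ℕ) : ℤ) + ((D % 10 ^ i : ℕ) : ℤ) := by
      exact_mod_cast (Nat.div_add_mod D (10 ^ i)).symm
    have hYd : (Y : ℤ) = 10 ^ i * ((Y / 10 ^ i : ℕ) : ℤ) + ((Y % 10 ^ i : ℕ) : ℤ) := by
      exact_mod_cast (Nat.div_add_mod Y (10 ^ i)).symm
    set R : ℤ := ((D % 10 ^ i : ℕ) : ℤ) - ((Y % 10 ^ i : ℕ) : ℤ) + (c i : ℤ) * 10 ^ i with hR
    have hEq : (E : ℤ) = R + 10 ^ i *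
        (((D / 10 ^ i : ℕ) : ℤ) - ((Y / 10 ^ i : ℕ) : ℤ) - (c i : ℤ)) := by
      rw [hR, hEZ, hDd, hYd]; ring
    have hR0 : 0 ≤ R ∧ R < 10 ^ i := by
      rw [hR]
      simp only [hc]
      by_cases h : D % 10 ^ i < Y % 10 ^ i
      · rw [if_pos h]
        have : ((D % 10 ^ i : ℕ) : ℤ) < ((Y % 10 ^ i : ℕ) : ℤ) := by exact_mod_cast h
        constructor <;> simp only [Nat.cast_one] <;> linarith
      · rw [if_neg h]
        have : ((Y % 10 ^ i : ℕ) : ℤ) ≤ ((D % 10 ^ i : ℕ) : ℤ) := by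
          exact_mod_cast Nat.le_of_not_lt h
        constructor <;> simp only [Nat.cast_zero] <;> linarith
    have : ((E % 10 ^ i : ℕ) : ℤ) = (E : ℤ) % (10 : ℤ) ^ i := by push_cast; ring
    rw [this, hEq, Int.add_mul_emod_self_left, Int.emod_eq_of_lt hR0.1 hR0.2]
  -- K4
  have hK4 : ∀ i : ℕ, ((e i : ℕ) : ℤ)
      = (a i : ℤ) - (b i : ℤ) - (c i : ℤ) + 10 * (c (i + 1) : ℤ) := by
    intro i
    have h10 : ((10 : ℤ) ^ i) ≠ 0 := by positivity
    have hE' : ((E % 10 ^ (i+1) : ℕ) : ℤ) = ((E % 10 ^ i : ℕ) : ℤ) + 10 ^ i * (e i : ℤ) := by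
      exact_mod_cast congrArg (Nat.cast : ℕ → ℤ) (mod_succ_pow E i)
    have hD' : ((D % 10 ^ (i+1) : ℕ) : ℤ) = ((D % 10 ^ i : ℕ) : ℤ) + 10 ^ i * (a i : ℤ) := by
      exact_mod_cast congrArg (Nat.cast : ℕ → ℤ) (mod_succ_pow D i)
    have hY' : ((Y % 10 ^ (i+1) : ℕ) : ℤ) = ((Y % 10 ^ i : ℕ) : ℤ) + 10 ^ i * (b i : ℤ) := by
      exact_mod_cast congrArg (Nat.cast : ℕ → ℤ) (mod_succ_pow Y i)
    have e1 := hK3 i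
    have e2 := hK3 (i + 1)
    apply mul_left_cancel₀ h10
    linear_combination e2 - e1 - hE' + hD' - hY'
  -- expansions
  have hEsum : E = ∑ i ∈ Finset.range (n + 1), e i * 10 ^ i := by
    have h1 := mod_pow_eq_sum E (n + 1)
    rwa [Nat.mod_eq_of_lt hElt] at h1
  have hlenEr : (Nat.digits 10 E).reverse.length = n + 1 := by
    rw [List.length_reverse, hlenE]
  have hrevE : rev E = ∑ i ∈ Finset.range (n + 1), e (n - i) * 10 ^ i := by
    show Nat.ofDigits 10 (Nat.digits 10 E).reverse = _
    rw [ofDigits_eq_sum_getD, hlenEr]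
    refine Finset.sum_congr rfl fun j hj => ?_
    have hj' : j ≤ n := Nat.lt_succ_iff.mp (Finset.mem_range.mp hj)
    have hjlen : j < (Nat.digits 10 E).reverse.length := by omega
    have hnj : n - j < (Nat.digits 10 E).length := by rw [hlenE]; omega
    rw [List.getD_eq_getElem _ _ hjlen, ← hgetE (n - j), List.getD_eq_getElem _ _ hnj,
      List.getElem_reverse]
    congr 2
    rw [hlenE]
    omega
  have hEsumZ : (E : ℤ) = ∑ i ∈ Finset.range (n + 1), (e i : ℤ) * 10 ^ i := by
    rw [hEsum]; push_cast; ring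
  have hrevEZ : ((rev E : ℕ) : ℤ) = ∑ i ∈ Finset.range (n + 1), (e i : ℤ) * 10 ^ (n - i) := by
    rw [hrevE]
    push_cast
    rw [← Finset.sum_range_reflect (fun i => (e i : ℤ) * 10 ^ (n - i)) (n + 1)]
    refine Finset.sum_congr rfl fun j hj => ?_
    have hj' : j ≤ n := Nat.lt_succ_iff.mp (Finset.mem_range.mp hj)
    have h3 : n + 1 - 1 - j = n - j := by omega
    have h4 : n - (n - j) = j := by omega
    rw [h3, h4]
  -- the target number N
  set L : List ℕ := (List.range n).map (fun j => c (n - j)) with hL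
  set N : ℕ := Nat.ofDigits 10 L with hN
  have hLlen : L.length = n := by simp [hL]
  have hNsum : N = ∑ j ∈ Finset.range n, c (n - j) * 10 ^ j := by
    rw [hN, ofDigits_eq_sum_getD, hLlen]
    refine Finset.sum_congr rfl fun j hj => ?_
    have hj' : j < n := Finset.mem_range.mp hj
    rw [hL, List.getD_eq_getElem _ _ (by simpa using hj')]
    simp [hj']
  have hNZ : (N : ℤ) = ∑ i ∈ Finset.range n, (c (i + 1) : ℤ) * 10 ^ (n - 1 - i) := by
    rw [hNsum]
    push_cast
    rw [← Finset.sum_range_reflect (fun i => (c (i + 1) : ℤ) * 10 ^ (n - 1 - i)) n]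
    refine Finset.sum_congr rfl fun j hj => ?_
    have hj' : j < n := Finset.mem_range.mp hj
    have h2 : n - 1 - j + 1 = n - j := by omega
    have h3 : n - 1 - (n - 1 - j) = j := by omega
    rw [h2, h3]
  -- the three sums
  have S1 : ∑ i ∈ Finset.range (n + 1),
      ((a i : ℤ) - (a (n - i) : ℤ)) * (10 ^ i + 10 ^ (n - i)) = 0 := by
    have h := Finset.sum_range_reflect (fun i => (a i : ℤ) * (10 ^ i + 10 ^ (n - i))) (n + 1)
    have h2 : ∑ i ∈ Finset.range (n + 1), (a (n - i) : ℤ) * (10 ^ i + 10 ^ (n - i))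
        = ∑ i ∈ Finset.range (n + 1), (a i : ℤ) * (10 ^ i + 10 ^ (n - i)) := by
      rw [← h]
      refine Finset.sum_congr rfl fun j hj => ?_
      have hj' : j ≤ n := Nat.lt_succ_iff.mp (Finset.mem_range.mp hj)
      have h3 : n + 1 - 1 - j = n - j := by omega
      have h4 : n - (n - j) = j := by omega
      rw [h3, h4]
      ring
    calc ∑ i ∈ Finset.range (n + 1), ((a i : ℤ) - (a (n - i) : ℤ)) * (10 ^ i + 10 ^ (n - i))
        = (∑ i ∈ Finset.range (n + 1), (a i : ℤ) * (10 ^ i + 10 ^ (n - i)))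
          - ∑ i ∈ Finset.range (n + 1), (a (n - i) : ℤ) * (10 ^ i + 10 ^ (n - i)) := by
          rw [← Finset.sum_sub_distrib]
          exact Finset.sum_congr rfl fun i _ => by ring
      _ = 0 := by rw [h2, sub_self]
  have S2 : ∑ i ∈ Finset.range (n + 1),
      ((10 : ℤ) * (c (i + 1) : ℤ) - (c i : ℤ)) * 10 ^ i = 0 := by
    have h := Finset.sum_range_sub (fun i => (c i : ℤ) * 10 ^ i) (n + 1)
    calc ∑ i ∈ Finset.range (n + 1), ((10 : ℤ) * (c (i + 1) : ℤ) - (c i : ℤ)) * 10 ^ i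
        = ∑ i ∈ Finset.range (n + 1),
            ((c (i + 1) : ℤ) * 10 ^ (i + 1) - (c i : ℤ) * 10 ^ i) :=
          Finset.sum_congr rfl fun i _ => by rw [pow_succ]; ring
      _ = (c (n + 1) : ℤ) * 10 ^ (n + 1) - (c 0 : ℤ) * 10 ^ 0 := h
      _ = 0 := by rw [hcn1, hc0]; simp
  have S3 : ∑ i ∈ Finset.range (n + 1),
      ((10 : ℤ) * (c (i + 1) : ℤ) - (c i : ℤ)) * 10 ^ (n - i) = 99 * (N : ℤ) := by
    have hA : ∑ i ∈ Finset.range (n + 1), (10 : ℤ) * (c (i + 1) : ℤ) * 10 ^ (n - i)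
        = ∑ i ∈ Finset.range n, (100 : ℤ) * ((c (i + 1) : ℤ) * 10 ^ (n - 1 - i)) := by
      rw [Finset.sum_range_succ, hcn1]
      simp only [Nat.cast_zero, mul_zero, zero_mul, add_zero]
      refine Finset.sum_congr rfl fun i hi => ?_
      have hi' : i < n := Finset.mem_range.mp hi
      have h5 : n - i = (n - 1 - i) + 1 := by omega
      rw [h5, pow_succ]
      ring
    have hB : ∑ i ∈ Finset.range (n + 1), (c i : ℤ) * 10 ^ (n - i)
        = ∑ i ∈ Finset.range n, (c (i + 1) : ℤ) * 10 ^ (n - 1 - i) := by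
      rw [Finset.sum_range_succ', hc0]
      simp only [Nat.cast_zero, zero_mul, add_zero]
      refine Finset.sum_congr rfl fun i hi => ?_
      have hi' : i < n := Finset.mem_range.mp hi
      have h5 : n - (i + 1) = n - 1 - i := by omega
      rw [h5]
    calc ∑ i ∈ Finset.range (n + 1), ((10 : ℤ) * (c (i + 1) : ℤ) - (c i : ℤ)) * 10 ^ (n - i)
        = (∑ i ∈ Finset.range (n + 1), (10 : ℤ) * (c (i + 1) : ℤ) * 10 ^ (n - i))
          - ∑ i ∈ Finset.range (n + 1), (c i : ℤ) * 10 ^ (n - i) := by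
          rw [← Finset.sum_sub_distrib]
          exact Finset.sum_congr rfl fun i _ => by ring
      _ = ∑ i ∈ Finset.range n, (99 : ℤ) * ((c (i + 1) : ℤ) * 10 ^ (n - 1 - i)) := by
          rw [hA, hB, ← Finset.sum_sub_distrib]
          exact Finset.sum_congr rfl fun i _ => by ring
      _ = 99 * (N : ℤ) := by rw [hNZ, Finset.mul_sum]
  -- main identity
  have hFZ : ((E + rev E : ℕ) : ℤ) = 99 * (N : ℤ) := by
    have step1 : ((E + rev E : ℕ) : ℤ)
        = ∑ i ∈ Finset.range (n + 1), (e i : ℤ) * (10 ^ i + 10 ^ (n - i)) := by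
      push_cast
      rw [hEsumZ, hrevEZ, ← Finset.sum_add_distrib]
      exact Finset.sum_congr rfl fun i _ => by ring
    have step2 : ∀ i ∈ Finset.range (n + 1), (e i : ℤ) * (10 ^ i + 10 ^ (n - i))
        = ((a i : ℤ) - (a (n - i) : ℤ)) * (10 ^ i + 10 ^ (n - i))
          + ((10 : ℤ) * (c (i + 1) : ℤ) - (c i : ℤ)) * 10 ^ i
          + ((10 : ℤ) * (c (i + 1) : ℤ) - (c i : ℤ)) * 10 ^ (n - i) := by
      intro i hi
      have hi' : i ≤ n := Nat.lt_succ_iff.mp (Finset.mem_range.mp hi)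
      rw [hK4 i, hK1 i hi']
      ring
    rw [step1, Finset.sum_congr rfl step2, Finset.sum_add_distrib, Finset.sum_add_distrib,
      S1, S2, S3]
    ring
  have hF : E + rev E = 99 * N := by exact_mod_cast hFZ
  -- leading digit comparison : a 0 < a n
  have hDn : D / 10 ^ n = a n := by
    rw [ha]
    simp only
    rw [Nat.mod_eq_of_lt]
    exact Nat.div_lt_of_lt_mul (by rw [← pow_succ]; exact hDlt)
  have ha0an : a 0 < a n := by
    have hDdec := Nat.div_add_mod D (10 ^ n)
    have hpow : 0 < (10:ℕ) ^ n := by positivity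
    have hDmod : D % 10 ^ n < 10 ^ n := Nat.mod_lt _ hpow
    have hbn : b n = a 0 := by simpa using hK1 n le_rfl
    have hYn : Y / 10 ^ n = a 0 := by
      rw [← hbn, hbdef]
      simp only
      rw [Nat.mod_eq_of_lt]
      exact Nat.div_lt_of_lt_mul (by rw [← pow_succ]; exact lt_trans hYlt hDlt)
    have hYge : 10 ^ n * a 0 ≤ Y := by
      rw [← hYn, mul_comm]
      exact Nat.div_mul_le_self Y (10 ^ n)
    have hED : 10 ^ n + Y ≤ D := by
      have := Nat.add_le_of_le_sub hYlt.le hEge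
      omega
    have hD2 : 10 ^ n * a n + D % 10 ^ n = D := by
      rw [← hDn]
      exact Nat.div_add_mod D (10 ^ n)
    have h6 : 10 ^ n * a 0 < 10 ^ n * a n := by linarith
    exact Nat.lt_of_mul_lt_mul_left h6
  have hc1 : c 1 = 1 := by
    simp only [hc]
    rw [if_pos]
    have hD10 : D % 10 ^ 1 = a 0 := by
      rw [ha]
      simp [pow_one]
    have hY10 : Y % 10 ^ 1 = a n := by
      have h := hK1 0 (Nat.zero_le n)
      rw [hbdef] at h
      simp only [pow_zero, Nat.div_one, Nat.sub_zero] at h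
      rw [pow_one, ← h]
    rw [hD10, hY10]
    exact ha0an
  -- conclusion
  have hLlast : L.getLast? = some 1 := by
    rw [List.getLast?_eq_getElem?, hLlen, hL, List.getElem?_map,
      List.getElem?_range (by omega : n - 1 < n)]
    simp only [Option.map_some]
    have h7 : n - (n - 1) = 1 := by omega
    rw [h7, hc1]
  have hdigN : Nat.digits 10 N = L := by
    apply Nat.digits_ofDigits 10 hb L
    · intro x hx
      rw [hL] at hx
      obtain ⟨j, hj, rfl⟩ := List.mem_map.mp hx
      exact lt_of_le_of_lt (hc_le _) (by norm_num)
    · intro hne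
      have h8 := List.getLast?_eq_getLast hne
      rw [hLlast] at h8
      have h9 : L.getLast hne = 1 := (Option.some_inj.mp h8).symm
      rw [h9]
      norm_num
  have hquot : (E + rev E) / 99 = N := by
    rw [hF]
    exact Nat.mul_div_cancel_left N (by norm_num)
  rw [hquot, hdigN]
  exact ⟨hLlen, hLlast⟩
end

section
/- (Hairpin pairing rule) Let B = B_{n−1} B_{n−2} … B_1 B_0 be a Papadakis–Webster binary string of length n (B_{n−1} being the leading digit). Then for every k with 1 ≤ k ≤ n−1, the digits at the paired positions k−1 and n−k−1 are unequal, B_{k−1} ≠ B_{n−k−1}, except in exactly two situations: (i) B_{k−1} = B_{n−k−1} = 1 and the preceding digits satisfy B_k = B_{n−k} = 1, or (ii) B_{k−1} = B_{n−k−1} = 0 and B_k = B_{n−k} = 0 (where B_n is interpreted as the leading value 1 arising before position n−1). -/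
/-- `F` is a Papadakis–Webster integer: `F = E + rev E` where `E = D - rev D`,
for some positive `D` with `D > rev D` such that `E` has the same number of
decimal digits as `D`. -/
def IsPWI (F : ℕ) : Prop :=
  ∃ D : ℕ, 0 < D ∧ rev D < D ∧
    (Nat.digits 10 (D - rev D)).length = (Nat.digits 10 D).length ∧
    F = (D - rev D) + rev (D - rev D)

/-- `Q` is a Papadakis–Webster binary string: the quotient `F / 99` of a
Papadakis–Webster integer `F`. -/
def IsPWBS (Q : ℕ) : Prop := ∃ F : ℕ, IsPWI F ∧ Q = F / 99

/-- The digit `B_i` of the PWBS `Q` of length `n` (little-endian index `i`, so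
`B_{n-1}` is the leading digit), where `B_n` is interpreted as the leading
value 1 arising before position `n-1`. -/
def pwbsDigit (Q n i : ℕ) : ℕ :=
  if i = n then 1 else (Nat.digits 10 Q).getD i 0

open Finset

/-- ofDigits as a finite sum over ℤ. -/
lemma ofDigits_eq_sum (L : List ℕ) :
    Nat.ofDigits (10:ℤ) L = ∑ i ∈ range L.length, (L.getD i 0 : ℤ) * 10 ^ i := by
  induction L with
  | nil => simp [Nat.ofDigits]
  | cons d t ih =>
    rw [show Nat.ofDigits (10:ℤ) (d::t) = (d:ℤ) + 10 * Nat.ofDigits (10:ℤ) t from rfl,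
      List.length_cons, Finset.sum_range_succ', ih, Finset.mul_sum]
    simp only [List.getD_cons_succ, List.getD_cons_zero, pow_succ, pow_zero, mul_one]
    rw [add_comm]
    congr 1
    exact Finset.sum_congr rfl (fun i _ => by ring)

lemma getD_reverse (L : List ℕ) (i : ℕ) (h : i < L.length) :
    L.reverse.getD i 0 = L.getD (L.length - 1 - i) 0 := by
  rw [List.getD_eq_getElem _ _ (by simpa using h), List.getD_eq_getElem _ _ (by omega),
    List.getElem_reverse]

lemma sum_digits_lt (f : ℕ → ℤ) (m : ℕ) (h0 : ∀ i < m, 0 ≤ f i) (h9 : ∀ i < m, f i ≤ 9) :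
    0 ≤ (∑ i ∈ range m, f i * 10 ^ i) ∧ (∑ i ∈ range m, f i * 10 ^ i) < 10 ^ m := by
  induction m with
  | zero => simp
  | succ m ih =>
    obtain ⟨l, u⟩ := ih (fun i hi => h0 i (by omega)) (fun i hi => h9 i (by omega))
    rw [Finset.sum_range_succ]
    have h1 := h9 m (by omega)
    have h2 := h0 m (by omega)
    have hp : (0:ℤ) < 10 ^ m := by positivity
    constructor
    · positivity
    · rw [pow_succ]; nlinarith

/-- The borrow sequence of the subtraction `D - rev D`:
`brw a m i` is the borrow into position `i` (so `brw a m 0 = 0`). -/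
def brw (a : ℕ → ℕ) (m : ℕ) : ℕ → ℕ
  | 0 => 0
  | (i+1) => if a i < a (m - 1 - i) + brw a m i then 1 else 0

lemma brw_le_one (a : ℕ → ℕ) (m i : ℕ) : brw a m i ≤ 1 := by
  cases i with
  | zero => simp [brw]
  | succ i => simp only [brw]; split <;> omega

lemma main (D : ℕ) (hD : 0 < D) (hrev : rev D < D)
    (hlen : (Nat.digits 10 (D - rev D)).length = (Nat.digits 10 D).length) :
    ∃ (a : ℕ → ℕ) (m : ℕ), 2 ≤ m ∧
      Nat.digits 10 (((D - rev D) + rev (D - rev D)) / 99)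
        = List.ofFn (fun i : Fin (m-1) => brw a m (m-1-(i:ℕ))) := by
  classical
  set L : List ℕ := Nat.digits 10 D with hL
  set m : ℕ := L.length with hm
  set a : ℕ → ℕ := fun i => L.getD i 0 with ha
  have coe10 : ∀ K : List ℕ, ((Nat.ofDigits 10 K : ℕ) : ℤ) = Nat.ofDigits (10:ℤ) K := by
    intro K
    rw [Nat.coe_ofDigits ℤ]
    norm_num
  have ha9 : ∀ i, a i ≤ 9 := by
    intro i
    by_cases h : i < L.length
    · have hmem : L[i] ∈ L := List.getElem_mem h
      have hlt : L[i] < 10 := Nat.digits_lt_base (by norm_num) hmem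
      simp only [ha]
      rw [List.getD_eq_getElem _ _ h]
      omega
    · simp only [ha]
      rw [List.getD_eq_default _ _ (by omega)]
      omega
  have hm1 : 1 ≤ m := by
    have : L ≠ [] := by
      rw [hL]
      exact Nat.digits_ne_nil_iff_ne_zero.mpr (by omega)
    have := List.length_pos_iff.mpr this
    omega
  have hm2 : 2 ≤ m := by
    by_contra h
    obtain ⟨x, hx⟩ := List.length_eq_one_iff.mp (show L.length = 1 by omega)
    have hDx : D = x := by
      conv_lhs => rw [← Nat.ofDigits_digits 10 D, ← hL, hx]
      simp
    have hrx : rev D = x := by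
      rw [rev, ← hL, hx]
      simp
    omega
  -- the borrow sequence
  set b : ℕ → ℕ := brw a m with hb
  have hb1 : ∀ i, b i ≤ 1 := fun i => brw_le_one a m i
  have hb0 : b 0 = 0 := rfl
  -- digit sums
  have hD_sum : (D:ℤ) = ∑ i ∈ range m, (a i : ℤ) * 10 ^ i := by
    conv_lhs => rw [← Nat.ofDigits_digits 10 D]
    rw [← hL, coe10, ofDigits_eq_sum, ← hm]
  have hrev_sum : (rev D : ℤ) = ∑ i ∈ range m, (a (m-1-i) : ℤ) * 10 ^ i := by
    rw [rev, ← hL, coe10, ofDigits_eq_sum, List.length_reverse, ← hm]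
    refine Finset.sum_congr rfl (fun i hi => ?_)
    rw [getD_reverse _ _ (by simpa [← hm] using Finset.mem_range.mp hi)]
  -- the digits of E
  set eZ : ℕ → ℤ := fun i => (a i : ℤ) - a (m-1-i) - b i + 10 * b (i+1) with heZ
  have he09 : ∀ i < m, 0 ≤ eZ i ∧ eZ i ≤ 9 := by
    intro i hi
    have h1 := ha9 i
    have h2 := ha9 (m-1-i)
    have h3 := hb1 i
    have h4 := hb1 (i+1)
    have hdef : b (i+1) = if a i < a (m-1-i) + b i then 1 else 0 := rfl
    simp only [heZ]
    split at hdef <;> omega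
  have htel : ∀ g : ℕ → ℤ, ∑ i ∈ range m, (10 * g (i+1) - g i) * 10 ^ i = g m * 10 ^ m - g 0 := by
    intro g
    rw [show g m * 10 ^ m - g 0 = (fun i => g i * 10 ^ i) m - (fun i => g i * 10 ^ i) 0 by simp,
      ← Finset.sum_range_sub (fun i => g i * 10 ^ i) m]
    exact Finset.sum_congr rfl (fun i _ => by rw [pow_succ]; ring)
  set E : ℕ := D - rev D with hE
  have hEZ : (E:ℤ) = (D:ℤ) - rev D := by
    rw [hE]
    push_cast [Nat.cast_sub (le_of_lt hrev)]
    ring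
  have hsum_split : ∑ i ∈ range m, eZ i * 10 ^ i = (D:ℤ) - rev D + (b m : ℤ) * 10 ^ m := by
    have hpt : ∀ i ∈ range m, eZ i * 10 ^ i
        = ((a i : ℤ) * 10 ^ i - (a (m-1-i) : ℤ) * 10 ^ i) + (10 * (b (i+1) : ℤ) - b i) * 10 ^ i := by
      intro i _
      simp only [heZ]; ring
    rw [Finset.sum_congr rfl hpt, Finset.sum_add_distrib, htel (fun i => (b i : ℤ)),
      Finset.sum_sub_distrib, ← hD_sum, ← hrev_sum, hb0]
    push_cast
    ring
  have hbm : b m = 0 := by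
    by_contra h
    have hbm1 : b m = 1 := by have := hb1 m; omega
    have hlt := (sum_digits_lt eZ m (fun i hi => (he09 i hi).1) (fun i hi => (he09 i hi).2)).2
    rw [hsum_split, hbm1] at hlt
    have h0E : (0:ℤ) ≤ (D:ℤ) - rev D := by rw [← hEZ]; positivity
    have : (0:ℤ) < 10 ^ m := by positivity
    push_cast at hlt
    omega
  have hEsum : (E:ℤ) = ∑ i ∈ range m, eZ i * 10 ^ i := by
    rw [hsum_split, hbm, hEZ]
    push_cast
    ring
  have hEne : E ≠ 0 := by omega
  have hElen : (Nat.digits 10 E).length = m := hlen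
  have hElb : (10:ℤ) ^ (m-1) ≤ (E:ℤ) := by
    have h10 := Nat.base_pow_length_digits_le 10 E (by norm_num) hEne
    rw [hElen] at h10
    have hpow : (10:ℕ) ^ m = 10 * 10 ^ (m-1) := by
      rw [← pow_succ']
      congr 1
      omega
    rw [hpow] at h10
    have : (10:ℕ) ^ (m-1) ≤ E := by omega
    exact_mod_cast this
  have hetop : 1 ≤ eZ (m-1) := by
    by_contra h
    have h0 : eZ (m-1) = 0 := by
      have := (he09 (m-1) (by omega)).1
      omega
    have hsplit : (E:ℤ) = ∑ i ∈ range (m-1), eZ i * 10 ^ i := by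
      rw [hEsum, show m = (m-1)+1 by omega, Finset.sum_range_succ,
        show (m-1)+1-1 = m-1 by omega, h0]
      ring
    have hlt := (sum_digits_lt eZ (m-1) (fun i hi => (he09 i (by omega)).1)
      (fun i hi => (he09 i (by omega)).2)).2
    rw [← hsplit] at hlt
    omega
  -- the digit list of E
  set eL : List ℕ := List.ofFn (fun i : Fin m => (eZ i).toNat) with heL
  have heLlen : eL.length = m := by rw [heL, List.length_ofFn]
  have heLget : ∀ i < m, (eL.getD i 0 : ℤ) = eZ i := by
    intro i hi
    rw [heL, List.getD_eq_getElem _ _ (by rw [List.length_ofFn]; exact hi), List.getElem_ofFn]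
    exact Int.toNat_of_nonneg (he09 i hi).1
  have hEofD : Nat.ofDigits 10 eL = E := by
    have h1 : ((Nat.ofDigits 10 eL : ℕ) : ℤ) = (E:ℤ) := by
      rw [coe10, ofDigits_eq_sum, heLlen, hEsum]
      exact Finset.sum_congr rfl (fun i hi => by
        rw [heLget i (Finset.mem_range.mp hi)])
    exact_mod_cast h1
  have hdigE : Nat.digits 10 E = eL := by
    rw [← hEofD]
    refine Nat.digits_ofDigits 10 (by norm_num) eL ?_ ?_
    · intro l hl
      rw [heL] at hl
      obtain ⟨i, hi⟩ := List.mem_ofFn.mp hl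
      have h9 := (he09 i i.2).2
      have h0 := (he09 i i.2).1
      omega
    · intro hne
      rw [List.getLast_eq_getElem]
      have hlast : (eL[eL.length - 1]'(by omega) : ℕ) = (eZ (m-1)).toNat := by
        simp only [heL, heLlen]
        rw [List.getElem_ofFn]
        simp
      rw [hlast]
      omega
  have hrevE_sum : (rev E : ℤ) = ∑ i ∈ range m, eZ (m-1-i) * 10 ^ i := by
    rw [rev, hdigE, coe10, ofDigits_eq_sum, List.length_reverse, heLlen]
    refine Finset.sum_congr rfl (fun i hi => ?_)
    have hi' := Finset.mem_range.mp hi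
    rw [getD_reverse _ _ (by omega : i < eL.length), heLlen,
      heLget (m-1-i) (by omega)]
  -- F = 99 * R
  set R : ℕ := Nat.ofDigits 10 (List.ofFn (fun i : Fin (m-1) => b (m-1-(i:ℕ)))) with hR
  have hR_sum : (R:ℤ) = ∑ i ∈ range (m-1), (b (m-1-i) : ℤ) * 10 ^ i := by
    rw [hR, coe10, ofDigits_eq_sum, List.length_ofFn]
    refine Finset.sum_congr rfl (fun i hi => ?_)
    have hi' := Finset.mem_range.mp hi
    rw [List.getD_eq_getElem _ _ (by rw [List.length_ofFn]; exact hi'), List.getElem_ofFn]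
  have hFR : ((E + rev E : ℕ) : ℤ) = 99 * R := by
    push_cast
    rw [hEsum, hrevE_sum, ← Finset.sum_add_distrib]
    have hpt : ∀ i ∈ range m, eZ i * 10 ^ i + eZ (m-1-i) * 10 ^ i
        = (10 * (b (i+1) : ℤ) - b i) * 10 ^ i
          + (10 * (b (m-i) : ℤ) * 10 ^ i - (b (m-1-i) : ℤ) * 10 ^ i) := by
      intro i hi
      have hi' := Finset.mem_range.mp hi
      simp only [heZ]
      rw [show m-1-(m-1-i) = i by omega, show m-1-i+1 = m-i by omega]
      ring
    rw [Finset.sum_congr rfl hpt, Finset.sum_add_distrib, htel (fun i => (b i : ℤ)), hb0]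
    obtain ⟨M, hM⟩ : ∃ M, m = M + 1 := ⟨m - 1, by omega⟩
    have hRM : (R:ℤ) = ∑ i ∈ range M, (b (M-i) : ℤ) * 10 ^ i := by
      rw [hR_sum, show m - 1 = M by omega]
    have hsecond : ∑ i ∈ range m, (10 * (b (m-i) : ℤ) * 10 ^ i - (b (m-1-i) : ℤ) * 10 ^ i)
        = 99 * R := by
      rw [Finset.sum_sub_distrib, hM,
        Finset.sum_range_succ' (fun i => 10 * (b (M+1-i) : ℤ) * 10 ^ i) M,
        Finset.sum_range_succ (fun i => (b (M+1-1-i) : ℤ) * 10 ^ i) M]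
      have hbM1 : (b (M+1) : ℤ) = 0 := by
        have h' : b (M+1) = 0 := by rw [show M+1 = m by omega]; exact hbm
        exact_mod_cast h'
      have hc1 : ∀ i ∈ range M, 10 * (b (M+1-(i+1)) : ℤ) * 10 ^ (i+1)
          = 100 * ((b (M-i) : ℤ) * 10 ^ i) := by
        intro i _
        rw [show M+1-(i+1) = M-i by omega, pow_succ]
        ring
      have hc2 : ∀ i ∈ range M, (b (M+1-1-i) : ℤ) * 10 ^ i = (b (M-i) : ℤ) * 10 ^ i := by
        intro i _
        rw [show M+1-1-i = M-i by omega]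
      rw [Finset.sum_congr rfl hc1, Finset.sum_congr rfl hc2, ← Finset.mul_sum, ← hRM,
        show M+1-0 = M+1 by omega, hbM1, show M+1-1-M = 0 by omega, hb0]
      push_cast
      ring
    rw [hsecond, hbm]
    push_cast
    ring
  refine ⟨a, m, hm2, ?_⟩
  have hQR : (E + rev E) / 99 = R := by
    have hFN : E + rev E = 99 * R := by exact_mod_cast hFR
    rw [hFN]
    exact Nat.mul_div_cancel_left R (by norm_num)
  rw [← hE] at *
  rw [hQR]
  -- digits of R
  have hb1eq : b 1 = 1 := by
    have he' : eZ (m-1) = (a (m-1) : ℤ) - a 0 - b (m-1) := by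
      simp only [heZ]
      rw [show m-1-(m-1) = 0 by omega, show m-1+1 = m by omega, hbm]
      push_cast
      ring
    have ha0 : a 0 < a (m-1) := by
      rw [he'] at hetop
      have := hb1 (m-1)
      omega
    have : b 1 = if a 0 < a (m-1-0) + b 0 then 1 else 0 := rfl
    rw [this, hb0]
    simp only [Nat.sub_zero]
    rw [if_pos (by omega)]
  refine Nat.digits_ofDigits 10 (by norm_num) _ ?_ ?_
  · intro l hl
    obtain ⟨i, hi⟩ := List.mem_ofFn.mp hl
    have := hb1 (m-1-(i:ℕ))
    omega
  · intro hne
    rw [List.getLast_eq_getElem]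
    have hlen' : (List.ofFn (fun i : Fin (m-1) => b (m-1-(i:ℕ)))).length = m - 1 :=
      List.length_ofFn
    have : (List.ofFn (fun i : Fin (m-1) => b (m-1-(i:ℕ))))[(List.ofFn
        (fun i : Fin (m-1) => b (m-1-(i:ℕ)))).length - 1]'(by omega)
        = b (m-1-((List.ofFn (fun i : Fin (m-1) => b (m-1-(i:ℕ)))).length - 1)) := by
      rw [List.getElem_ofFn]
    rw [this, hlen', show m-1-(m-1-1) = 1 by omega, hb1eq]
    omega


/-- hairpin pairing rule: for a Papadakis–Webster binary string
`B_{n-1} … B_1 B_0` of length `n` and every `k` with `1 ≤ k ≤ n-1`, the digits at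
the paired positions `k-1` and `n-k-1` are unequal, except in exactly two
situations: both equal 1 with `B_k = B_{n-k} = 1`, or both equal 0 with
`B_k = B_{n-k} = 0`. -/
theorem stmt6 (Q n : ℕ) (hQ : IsPWBS Q)
    (hn : (Nat.digits 10 Q).length = n) :
    ∀ k : ℕ, 1 ≤ k → k ≤ n - 1 →
      pwbsDigit Q n (k - 1) = pwbsDigit Q n (n - k - 1) →
        (pwbsDigit Q n (k - 1) = 1 ∧ pwbsDigit Q n k = 1 ∧ pwbsDigit Q n (n - k) = 1) ∨
        (pwbsDigit Q n (k - 1) = 0 ∧ pwbsDigit Q n k = 0 ∧ pwbsDigit Q n (n - k) = 0) := by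
  intro k hk1 hk2 heq
  obtain ⟨F, ⟨D, hD, hrev, hlen, hF⟩, hQF⟩ := hQ
  obtain ⟨a, m, hm2, hdig⟩ := main D hD hrev hlen
  have hdigQ : Nat.digits 10 Q = List.ofFn (fun i : Fin (m-1) => brw a m (m-1-(i:ℕ))) := by
    rw [hQF, hF]
    exact hdig
  have hn' : n = m - 1 := by rw [← hn, hdigQ, List.length_ofFn]
  have hBd : ∀ i, i < n → pwbsDigit Q n i = brw a m (m-1-i) := by
    intro i hi
    unfold pwbsDigit
    rw [if_neg (by omega), hdigQ,
      List.getD_eq_getElem _ _ (by rw [List.length_ofFn]; omega), List.getElem_ofFn]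
  rw [hBd (k-1) (by omega), hBd (n-k-1) (by omega)] at heq
  rw [hBd (k-1) (by omega), hBd k (by omega), hBd (n-k) (by omega)]
  have i1 : m-1-(k-1) = m-k := by omega
  have i2 : m-1-(n-k-1) = k+1 := by omega
  have i3 : m-1-(n-k) = k := by omega
  rw [i1, i2] at heq
  rw [i1, i3]
  have e1 : brw a m (k+1) = if a k < a (m-1-k) + brw a m k then 1 else 0 := rfl
  obtain ⟨j, hj⟩ : ∃ j, m - k = j + 1 := ⟨m-k-1, by omega⟩
  have hjv : j = m-1-k := by omega
  have e2 : brw a m (m-k) = if a (m-1-k) < a k + brw a m (m-1-k) then 1 else 0 := by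
    rw [hj]
    show (if a j < a (m-1-j) + brw a m j then 1 else 0) = _
    rw [hjv, show m-1-(m-1-k) = k by omega]
  have t1 := brw_le_one a m k
  have t2 := brw_le_one a m (m-1-k)
  split at e1 <;> split at e2 <;> omega
end

section
/- For all integers L ≥ 2 and K ≥ 2, let B = R_L·10^{L+K} + R_L where R_L = (10^L − 1)/9 is the length-L repunit, so that the decimal digit string of B is (1)_L (0)_K (1)_L (L ones, K zeros, L ones). Then the integer 99·B satisfies rev(99·B) = 9·(99·B); consequently 99·B and 10·99·B form a 2-cycle of the iterative digital reversal map. Likewise, for every L ≥ 2 the integer 99·R_L satisfies rev(99·R_L) = 9·(99·R_L). -/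
/-- The iterative digital reversal map: `D ↦ D - rev D` if `rev D < D`,
and `D ↦ D + rev D` if `rev D ≥ D`. -/
def IDR (D : ℕ) : ℕ := if rev D < D then D - rev D else D + rev D

/-- The length-`L` repunit `(10^L - 1)/9`, whose decimal expansion is `L` ones. -/
def repunit (L : ℕ) : ℕ := (10 ^ L - 1) / 9

lemma nine_mul_repunit (L : ℕ) : 9 * repunit L = 10 ^ L - 1 := by
  have h : (9 : ℕ) ∣ 10 ^ L - 1 := by
    simpa using Nat.sub_dvd_pow_sub_pow 10 1 L
  rw [repunit, Nat.mul_div_cancel' h]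

lemma pow_ten_pos (n : ℕ) : 0 < 10 ^ n := Nat.pow_pos (by norm_num)

lemma digits_M (j : ℕ) :
    Nat.digits 10 (11 * 10 ^ j - 1) = List.replicate j 9 ++ [0, 1] := by
  induction j with
  | zero =>
      norm_num
  | succ j ih =>
      have hpos : 0 < 11 * 10 ^ j - 1 := by
        have := pow_ten_pos j; omega
      have key : 11 * 10 ^ (j + 1) - 1 = 10 * (11 * 10 ^ j - 1) + 9 := by
        have := pow_ten_pos j
        ring_nf
        omega
      rw [key, Nat.digits_def' (by norm_num : (1:ℕ) < 10) (by omega)]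
      have hmod : (10 * (11 * 10 ^ j - 1) + 9) % 10 = 9 := by omega
      have hdiv : (10 * (11 * 10 ^ j - 1) + 9) / 10 = 11 * 10 ^ j - 1 := by omega
      rw [hmod, hdiv, ih, List.replicate_succ]
      simp

lemma digits_N (L : ℕ) (hL : 2 ≤ L) :
    Nat.digits 10 (99 * repunit L) =
      9 :: 8 :: (List.replicate (L - 2) 9 ++ [0, 1]) := by
  have h9 : 9 * repunit L = 10 ^ L - 1 := nine_mul_repunit L
  have hN : 99 * repunit L = 11 * (10 ^ L - 1) := by
    calc 99 * repunit L = 11 * (9 * repunit L) := by ring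
    _ = 11 * (10 ^ L - 1) := by rw [h9]
  have hLsplit : 10 ^ L = 10 ^ (L - 2) * 100 := by
    have : L = (L - 2) + 2 := by omega
    rw [this, pow_add]; norm_num
  have hMpos : 0 < 11 * 10 ^ (L - 2) - 1 := by
    have := pow_ten_pos (L - 2); omega
  have key : 99 * repunit L = 10 * (8 + 10 * (11 * 10 ^ (L - 2) - 1)) + 9 := by
    rw [hN, hLsplit]
    have := pow_ten_pos (L - 2)
    ring_nf
    omega
  rw [key, Nat.digits_def' (by norm_num : (1:ℕ) < 10) (by omega)]
  have hmod : (10 * (8 + 10 * (11 * 10 ^ (L-2) - 1)) + 9) % 10 = 9 := by omega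
  have hdiv : (10 * (8 + 10 * (11 * 10 ^ (L-2) - 1)) + 9) / 10
      = 8 + 10 * (11 * 10 ^ (L-2) - 1) := by omega
  rw [hmod, hdiv, Nat.digits_def' (by norm_num : (1:ℕ) < 10) (by omega)]
  have hmod2 : (8 + 10 * (11 * 10 ^ (L-2) - 1)) % 10 = 8 := by omega
  have hdiv2 : (8 + 10 * (11 * 10 ^ (L-2) - 1)) / 10 = 11 * 10 ^ (L-2) - 1 := by
    omega
  rw [hmod2, hdiv2, digits_M]

lemma ofDigits_replicate_nine (n : ℕ) :
    Nat.ofDigits 10 (List.replicate n 9) = 10 ^ n - 1 := by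
  induction n with
  | zero => simp
  | succ n ih =>
      rw [List.replicate_succ, Nat.ofDigits_cons, ih]
      have := pow_ten_pos n
      ring_nf
      omega

lemma ofDigits_replicate_zero (n : ℕ) :
    Nat.ofDigits 10 (List.replicate n 0) = 0 := by
  induction n with
  | zero => simp
  | succ n ih => rw [List.replicate_succ, Nat.ofDigits_cons, ih]

lemma rev_N (L : ℕ) (hL : 2 ≤ L) :
    rev (99 * repunit L) = 9 * (99 * repunit L) := by
  have hdig := digits_N L hL
  have h9 : 9 * repunit L = 10 ^ L - 1 := nine_mul_repunit L
  have hLsplit : 10 ^ L = 10 ^ (L - 2) * 100 := by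
    have : L = (L - 2) + 2 := by omega
    rw [this, pow_add]; norm_num
  rw [rev, hdig]
  have hrevlist : (9 :: 8 :: (List.replicate (L - 2) 9 ++ [0, 1])).reverse
      = [1, 0] ++ (List.replicate (L - 2) 9 ++ [8, 9]) := by
    simp [List.reverse_replicate]
  rw [hrevlist, Nat.ofDigits_append, Nat.ofDigits_append]
  rw [ofDigits_replicate_nine]
  have hp := pow_ten_pos (L - 2)
  simp only [List.length_cons, List.length_replicate]
  have hval : 99 * repunit L = 11 * (10 ^ L - 1) := by
    calc 99 * repunit L = 11 * (9 * repunit L) := by ring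
    _ = 11 * (10 ^ L - 1) := by rw [h9]
  rw [hval, hLsplit]
  norm_num [Nat.ofDigits]
  ring_nf
  omega

lemma digits_len_N (L : ℕ) (hL : 2 ≤ L) :
    (Nat.digits 10 (99 * repunit L)).length = L + 2 := by
  rw [digits_N L hL]
  simp
  omega

lemma repunit_pos (L : ℕ) (hL : 2 ≤ L) : 0 < repunit L := by
  have h9 : 9 * repunit L = 10 ^ L - 1 := nine_mul_repunit L
  have h100 : (100 : ℕ) ≤ 10 ^ L := by
    calc (100 : ℕ) = 10 ^ 2 := by norm_num
    _ ≤ 10 ^ L := Nat.pow_le_pow_right (by norm_num) hL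
  omega

lemma rev_ten_mul (D : ℕ) (hD : 0 < D) : rev (10 * D) = rev D := by
  have : Nat.digits 10 (10 * D) = 0 :: Nat.digits 10 D := by
    rw [Nat.digits_def' (by norm_num : (1:ℕ) < 10) (by omega)]
    have h1 : 10 * D % 10 = 0 := by omega
    have h2 : 10 * D / 10 = D := by omega
    rw [h1, h2]
  rw [rev, this, List.reverse_cons, Nat.ofDigits_append, rev]
  simp

/-- for all `L, K ≥ 2`, with `B = R_L·10^{L+K} + R_L` (digit string
`(1)_L (0)_K (1)_L`), the integer `99·B` satisfies `rev (99·B) = 9·(99·B)`, so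
`99·B` and `10·99·B` form a 2-cycle of IDR; likewise `rev (99·R_L) = 9·(99·R_L)`
for every `L ≥ 2`. -/
theorem stmt13 (L K : ℕ) (hL : 2 ≤ L) (hK : 2 ≤ K) :
    (rev (99 * (repunit L * 10 ^ (L + K) + repunit L)) =
        9 * (99 * (repunit L * 10 ^ (L + K) + repunit L)) ∧
      IDR (99 * (repunit L * 10 ^ (L + K) + repunit L)) =
        10 * (99 * (repunit L * 10 ^ (L + K) + repunit L)) ∧
      IDR (10 * (99 * (repunit L * 10 ^ (L + K) + repunit L))) =
        99 * (repunit L * 10 ^ (L + K) + repunit L)) ∧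
    rev (99 * repunit L) = 9 * (99 * repunit L) := by
  have hN := rev_N L hL
  set N := 99 * repunit L with hNdef
  have hNpos : 0 < N := by
    have := repunit_pos L hL; positivity
  -- The big number B' := 99 * (R * 10^(L+K) + R) = N + 10^(L+K) * N
  have hBeq : 99 * (repunit L * 10 ^ (L + K) + repunit L)
      = N + 10 ^ ((Nat.digits 10 N).length + (K - 2)) * N := by
    rw [digits_len_N L hL]
    have : L + 2 + (K - 2) = L + K := by omega
    rw [this]; ring
  set B := 99 * (repunit L * 10 ^ (L + K) + repunit L) with hBdef
  have hdigB : Nat.digits 10 B =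
      Nat.digits 10 N ++ List.replicate (K - 2) 0 ++ Nat.digits 10 N := by
    rw [hBeq]
    exact (Nat.digits_append_zeroes_append_digits (b := 10) (k := K - 2) (n := N) (by norm_num) hNpos).symm
  have hrevB : rev B = 9 * B := by
    rw [rev, hdigB]
    simp only [List.reverse_append, List.reverse_replicate]
    rw [Nat.ofDigits_append, Nat.ofDigits_append, ofDigits_replicate_zero]
    have hlenrev : (Nat.digits 10 N).reverse.length = (Nat.digits 10 N).length :=
      List.length_reverse
    rw [hlenrev]
    have : Nat.ofDigits 10 (Nat.digits 10 N).reverse = rev N := rfl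
    rw [this, hN, List.length_replicate]
    rw [hBeq]
    ring
  have hBpos : 0 < B := by
    rw [hBeq]; omega
  refine ⟨⟨hrevB, ?_, ?_⟩, hN⟩
  · rw [IDR, if_neg (by omega : ¬ rev B < B), hrevB]; omega
  · have h10 : rev (10 * B) = 9 * B := by rw [rev_ten_mul B hBpos, hrevB]
    rw [IDR, h10, if_pos (by omega)]
    omega
end
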